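/- arXiv:2003.10660 — 2 statements merged into one kernel-verified Lean document; each statement's English description precedes it below -/
import Mathlib

section
/- Fix an integer r ≥ 3 and let {T_n^{(r)}} be the generalized r-tribonacci numbers. For every integer n ≥ 2, the Toeplitz–Hessenberg determinant det(1; T_{r+1}^{(r)}, T_{r+2}^{(r)}, …, T_{n+r}^{(r)}) equals Σ_{i=0}^{⌊n/(r−1)⌋} (−1)^{r·i} · C(n−(r−2)i, i). -/
/-- The determinant of the `n × n` Toeplitz–Hessenberg matrix whose `(i,j)` entry
(0-indexed) is `a (i - j + 1)` when `j ≤ i + 1` (so `a 0` lies on the superdiagonal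
and `a k` on the `k`-th subdiagonal) and `0` otherwise. -/
def THdet (a : ℕ → ℤ) (n : ℕ) : ℤ :=
  (Matrix.of fun i j : Fin n => if (j : ℕ) ≤ (i : ℕ) + 1 then a ((i : ℕ) + 1 - (j : ℕ)) else 0).det

def THmat (a : ℕ → ℤ) (n : ℕ) : Matrix (Fin n) (Fin n) ℤ :=
  Matrix.of fun i j : Fin n => if (j : ℕ) ≤ (i : ℕ) + 1 then a ((i : ℕ) + 1 - (j : ℕ)) else 0

lemma THdet_eq (a : ℕ → ℤ) (n : ℕ) : THdet a n = (THmat a n).det := rfl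

lemma THmat_sub (a : ℕ → ℤ) (n : ℕ) :
    (THmat a (n+1)).submatrix Fin.succ Fin.succ = THmat a n := by
  ext i j
  simp only [THmat, Matrix.submatrix_apply, Matrix.of_apply, Fin.val_succ]
  have h1 : (j:ℕ) + 1 ≤ (i:ℕ) + 1 + 1 ↔ (j:ℕ) ≤ (i:ℕ) + 1 := by omega
  have h2 : (i:ℕ) + 1 + 1 - ((j:ℕ)+1) = (i:ℕ) + 1 - (j:ℕ) := by omega
  rw [h2]
  simp [h1]

lemma THminor (a : ℕ → ℤ) (ha : a 0 = 1) :
    ∀ (n : ℕ) (i : Fin (n+1)),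
      ((THmat a (n+1)).submatrix i.succAbove Fin.succ).det = THdet a (n - (i:ℕ)) := by
  intro n
  induction n with
  | zero =>
    intro i
    fin_cases i
    simp [THdet, Matrix.det_fin_zero]
  | succ n ih =>
    intro i
    refine Fin.cases ?_ ?_ i
    · rw [Fin.succAbove_zero]
      rw [show ((THmat a (n+1+1)).submatrix Fin.succ Fin.succ) = THmat a (n+1) from THmat_sub a (n+1)]
      simp [THdet_eq]
    · intro j
      set N := (THmat a (n+2)).submatrix (Fin.succAbove j.succ) Fin.succ with hN
      have hrow0 : ∀ l : Fin (n+1), N 0 l = if l = 0 then 1 else 0 := by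
        intro l
        simp only [hN, Matrix.submatrix_apply, THmat, Matrix.of_apply]
        have h0 : j.succ.succAbove 0 = 0 := Fin.succ_succAbove_zero j
        rw [h0]
        rcases eq_or_ne l 0 with h | h
        · subst h; simpa using ha
        · have : ¬ ((l.succ : ℕ) ≤ (0:Fin (n+2)) + 1) := by
            simp only [Fin.val_succ, Fin.val_zero]
            have hl : (l:ℕ) ≠ 0 := fun hc => h (Fin.ext hc)
            omega
          simp only [Fin.val_zero]
          rw [if_neg]
          · simp [h]
          · exact h
      rw [Matrix.det_succ_row_zero]
      rw [Finset.sum_eq_single 0]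
      · rw [hrow0 0]
        simp only [if_pos rfl, Fin.val_zero, pow_zero, one_mul, mul_one]
        have hcomp : (N.submatrix Fin.succ (Fin.succAbove 0)) =
            (THmat a (n+1)).submatrix (Fin.succAbove j) Fin.succ := by
          rw [Fin.succAbove_zero, hN]
          rw [Matrix.submatrix_submatrix]
          rw [← THmat_sub a (n+1), Matrix.submatrix_submatrix]
          have hfun : (j.succ.succAbove ∘ Fin.succ : Fin n → Fin (n+2)) = ((Fin.succ ∘ j.succAbove : Fin n → Fin (n+2))) :=
            funext (fun k => Fin.succ_succAbove_succ j k)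
          rw [hfun]
        rw [hcomp, ih j]
        have h3 : (n + 1) - ((j.succ : ℕ)) = n - (j:ℕ) := by simp [Fin.val_succ]
        rw [h3]
        simp
      · intro l _ hl
        rw [hrow0 l, if_neg hl]
        ring
      · intro h; simp at h

lemma THdet_zero (a : ℕ → ℤ) : THdet a 0 = 1 := by
  simp [THdet, Matrix.det_fin_zero]

lemma THdet_rec (a : ℕ → ℤ) (ha : a 0 = 1) (n : ℕ) :
    THdet a (n+1) = ∑ k ∈ Finset.range (n+1), (-1:ℤ)^k * a (k+1) * THdet a (n - k) := by
  rw [THdet_eq, Matrix.det_succ_column_zero]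
  rw [← Fin.sum_univ_eq_sum_range (fun k => (-1:ℤ)^k * a (k+1) * THdet a (n - k))]
  apply Finset.sum_congr rfl
  intro i _
  rw [THminor a ha n i]
  have : (THmat a (n+1)) i 0 = a ((i:ℕ)+1) := by
    simp only [THmat, Matrix.of_apply, Fin.val_zero]
    simp
  rw [this]

def sN (r : ℕ) (m : ℕ) : ℤ :=
  ∑ i ∈ Finset.range (m+1), ((-1:ℤ)^r)^i * (((m - (r-2)*i).choose i : ℕ) : ℤ)

lemma choose_vanish (r : ℕ) (hr : 3 ≤ r) (m i : ℕ) (hi : 1 ≤ i) (h : m < (r-1)*i) :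
    (m - (r-2)*i).choose i = 0 := by
  have e : (r-1)*i = (r-2)*i + i := by
    have : r - 1 = (r-2) + 1 := by omega
    rw [this]; ring
  rcases le_or_gt ((r-2)*i) m with hle | hlt
  · exact Nat.choose_eq_zero_of_lt (by omega)
  · have : m - (r-2)*i = 0 := by omega
    rw [this]
    exact Nat.choose_eq_zero_of_lt (by omega)

lemma sN_zero (r : ℕ) : sN r 0 = 1 := by simp [sN]

lemma sN_rec (r : ℕ) (hr : 3 ≤ r) (m : ℕ) :
    sN r (m+1) = sN r m +
      (if r-1 ≤ m+1 then ((-1:ℤ)^r) * sN r (m+1-(r-1)) else 0) := by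
  set c : ℤ := (-1:ℤ)^r with hc
  have key : sN r (m+1) - sN r m =
      ∑ j ∈ Finset.range (m+1),
        (if (r-1)*(j+1) ≤ m+1 then c^(j+1) * (((m - (r-2)*(j+1)).choose j : ℕ) : ℤ) else 0) := by
    have h1 : sN r m = ∑ i ∈ Finset.range (m+2), c^i * (((m - (r-2)*i).choose i : ℕ) : ℤ) := by
      rw [Finset.sum_range_succ]
      have hv : (m - (r-2)*(m+1)).choose (m+1) = 0 := by
        apply choose_vanish r hr m (m+1) (by omega)
        have : (r-1)*(m+1) ≥ 2*(m+1) := Nat.mul_le_mul_right _ (by omega)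
        omega
      rw [hv]
      simp [sN, hc]
    rw [h1, sN]
    rw [← Finset.sum_sub_distrib]
    rw [Finset.sum_range_succ']
    have h0 : c^0 * (((m + 1 - (r-2)*0).choose 0 : ℕ) : ℤ) - c^0 * (((m - (r-2)*0).choose 0 : ℕ) : ℤ) = 0 := by
      simp
    rw [h0, add_zero]
    apply Finset.sum_congr rfl
    intro j _
    rcases le_or_gt ((r-1)*(j+1)) (m+1) with hcond | hcond
    · rw [if_pos hcond]
      have e : (r-1)*(j+1) = (r-2)*(j+1) + (j+1) := by
        have : r - 1 = (r-2) + 1 := by omega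
        rw [this]; ring
      have hsub : m + 1 - (r-2)*(j+1) = (m - (r-2)*(j+1)) + 1 := by omega
      rw [hsub, Nat.choose_succ_succ]
      push_cast
      ring
    · rw [if_neg (by omega)]
      have hv1 : (m + 1 - (r-2)*(j+1)).choose (j+1) = 0 :=
        choose_vanish r hr (m+1) (j+1) (by omega) hcond
      have hv2 : (m - (r-2)*(j+1)).choose (j+1) = 0 :=
        choose_vanish r hr m (j+1) (by omega) (by omega)
      rw [hv1, hv2]
      simp
  rcases le_or_gt (r-1) (m+1) with hcase | hcase
  · rw [if_pos hcase]
    set q := m + 1 - (r-1) with hq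
    have h2 : c * sN r q = ∑ j ∈ Finset.range (m+1),
        (if (r-1)*(j+1) ≤ m+1 then c^(j+1) * (((m - (r-2)*(j+1)).choose j : ℕ) : ℤ) else 0) := by
      rw [sN, Finset.mul_sum]
      rw [Finset.sum_subset (Finset.range_subset_range.mpr (show q + 1 ≤ m + 1 by omega))]
      · apply Finset.sum_congr rfl
        intro j hj
        simp only [Finset.mem_range] at hj
        have e : (r-1)*(j+1) = (r-1)*j + (r-1) := by ring
        have e2 : (r-2)*(j+1) = (r-2)*j + (r-2) := by ring
        have e3 : (r-1)*j = (r-2)*j + j := by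
          have h9 : r - 1 = (r-2) + 1 := by omega
          rw [h9]; ring
        rcases le_or_gt ((r-1)*(j+1)) (m+1) with hcond | hcond
        · rw [if_pos hcond]
          have h8 : q - (r-2)*j = m - (r-2)*(j+1) := by omega
          rw [h8, ← hc, pow_succ']
          ring
        · rw [if_neg (by omega)]
          have hj1 : 1 ≤ j := by
            rcases Nat.eq_zero_or_pos j with h0 | h0
            · subst h0
              simp at hcond
              omega
            · exact h0
          have h7 : (q - (r-2)*j).choose j = 0 := by
            apply choose_vanish r hr q j hj1
            omega
          rw [h7]
          simp
      · intro j hjm hjq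
        simp only [Finset.mem_range] at hjm hjq
        have hjj : (r-1)*j ≥ j := Nat.le_mul_of_pos_left _ (by omega)
        have hj1 : 1 ≤ j := by omega
        have h7 : (q - (r-2)*j).choose j = 0 :=
          choose_vanish r hr q j hj1 (by omega)
        rw [h7]
        simp
    rw [← h2] at key
    linarith
  · rw [if_neg (by omega)]
    have hall : ∀ j ∈ Finset.range (m+1),
        (if (r-1)*(j+1) ≤ m+1 then c^(j+1) * (((m - (r-2)*(j+1)).choose j : ℕ) : ℤ) else 0) = 0 := by
      intro j _
      rw [if_neg]
      have : (r-1)*(j+1) ≥ (r-1)*1 := Nat.mul_le_mul_left _ (by omega)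
      omega
    rw [Finset.sum_congr rfl hall] at key
    simp at key
    linarith

/-! ## ℤ-indexed sequences -/

def Sz (r : ℕ) : ℤ → ℤ := fun m => if m < 0 then 0 else sN r m.toNat

def Az (r : ℕ) (T : ℕ → ℤ) : ℤ → ℤ :=
  fun k => if k < 0 then 0 else if k = 0 then 1 else (-1)^k.toNat * T (k.toNat + r)

def Ez (r : ℕ) : ℤ → ℤ :=
  fun m => Sz r m + Sz r (m-1) - Sz r (m-2) - (-1)^r * Sz r (m - r)

def Dz (r : ℕ) (T : ℕ → ℤ) : ℤ → ℤ :=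
  fun m => if m < 0 then 0 else THdet (fun k => if k = 0 then 1 else T (k + r)) m.toNat

lemma Sz_neg (r : ℕ) (x : ℤ) (h : x < 0) : Sz r x = 0 := if_pos h

lemma Sz_coe (r : ℕ) (m : ℕ) : Sz r (m : ℤ) = sN r m := by
  simp [Sz]

lemma Az_neg (r : ℕ) (T : ℕ → ℤ) (x : ℤ) (h : x < 0) : Az r T x = 0 := if_pos h

lemma Az_zero (r : ℕ) (T : ℕ → ℤ) : Az r T 0 = 1 := rfl

lemma Az_zero' (r : ℕ) (T : ℕ → ℤ) : Az r T ((0:ℕ):ℤ) = 1 := rfl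

lemma Az_coe (r : ℕ) (T : ℕ → ℤ) (k : ℕ) (hk : 1 ≤ k) :
    Az r T (k : ℤ) = (-1)^k * T (k + r) := by
  simp only [Az]
  rw [if_neg (by omega), if_neg (by exact_mod_cast (by omega : ¬ (k:ℤ) = 0))]
  simp

lemma Dz_neg (r : ℕ) (T : ℕ → ℤ) (x : ℤ) (h : x < 0) : Dz r T x = 0 := if_pos h

lemma Dz_coe (r : ℕ) (T : ℕ → ℤ) (m : ℕ) :
    Dz r T (m : ℤ) = THdet (fun k => if k = 0 then 1 else T (k + r)) m := by
  simp [Dz]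

/-! ## T basic values -/

section Tvals
variable (r : ℕ) (T : ℕ → ℤ) (hr : 3 ≤ r)
  (hT0 : ∀ k, k < r - 1 → T k = 0) (hT1 : T (r - 1) = 1)
  (hTrec : ∀ n, r ≤ n → T n = T (n - 1) + T (n - 2) + T (n - r))

include hr hT0 hT1 hTrec

lemma T_r : T r = 1 := by
  have h := hTrec r le_rfl
  rw [hT1] at h
  rw [hT0 (r-2) (by omega), hT0 (r - r) (by omega)] at h
  omega

lemma T_r1 : T (r+1) = 2 := by
  have h := hTrec (r+1) (by omega)
  have e1 : r + 1 - 1 = r := by omega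
  have e2 : r + 1 - 2 = r - 1 := by omega
  have e3 : r + 1 - r = 1 := by omega
  rw [e1, e2, e3, hT1, T_r r T hr hT0 hT1 hTrec, hT0 1 (by omega)] at h
  omega

lemma B_identity (k : ℕ) :
    Az r T k + Az r T ((k:ℤ)-1) - Az r T ((k:ℤ)-2) - (-1)^r * Az r T ((k:ℤ)-r) =
      (if k = 0 then 1 else 0) - (if k = 1 then 1 else 0)
        - (-1)^r * (if k = r-1 then 1 else 0) := by
  have hTr := T_r r T hr hT0 hT1 hTrec
  have hTr1 := T_r1 r T hr hT0 hT1 hTrec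
  match k with
  | 0 =>
    have h1 : Az r T ((0:ℕ):ℤ) = 1 := rfl
    have h2 : Az r T (((0:ℕ):ℤ) - 1) = 0 := Az_neg _ _ _ (by omega)
    have h3 : Az r T (((0:ℕ):ℤ) - 2) = 0 := Az_neg _ _ _ (by omega)
    have h4 : Az r T (((0:ℕ):ℤ) - r) = 0 := Az_neg _ _ _ (by omega)
    rw [h1, h2, h3, h4, if_pos rfl, if_neg (by omega), if_neg (by omega)]
    ring
  | 1 =>
    have h1 : Az r T ((1:ℕ):ℤ) = -T (1+r) := by rw [Az_coe r T 1 le_rfl]; ring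
    have h2 : Az r T (((1:ℕ):ℤ) - 1) = 1 := by norm_num [Az]
    have h3 : Az r T (((1:ℕ):ℤ) - 2) = 0 := Az_neg _ _ _ (by omega)
    have h4 : Az r T (((1:ℕ):ℤ) - r) = 0 := Az_neg _ _ _ (by omega)
    have e : 1 + r = r + 1 := by omega
    rw [h1, h2, h3, h4, if_neg (by omega), if_pos rfl, if_neg (by omega), e, hTr1]
    ring
  | 2 =>
    have h1 : Az r T ((2:ℕ):ℤ) = T (2+r) := by rw [Az_coe r T 2 (by omega)]; norm_num
    have h2 : Az r T (((2:ℕ):ℤ) - 1) = -T (1+r) := by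
      rw [show ((2:ℕ):ℤ) - 1 = ((1:ℕ):ℤ) by norm_num, Az_coe r T 1 le_rfl]; ring
    have h3 : Az r T (((2:ℕ):ℤ) - 2) = 1 := by norm_num [Az]
    have h4 : Az r T (((2:ℕ):ℤ) - r) = 0 := Az_neg _ _ _ (by omega)
    have hrec2 : T (r + 2) = T (r + 1) + T r + T 2 := by
      have h := hTrec (r+2) (by omega)
      have e1 : r + 2 - 1 = r + 1 := by omega
      have e2 : r + 2 - 2 = r := by omega
      have e3 : r + 2 - r = 2 := by omega
      rw [e1, e2, e3] at h; exact h
    have e4 : 2 + r = r + 2 := by omega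
    have e5 : 1 + r = r + 1 := by omega
    rw [h1, h2, h3, h4, if_neg (by omega), if_neg (by omega), e4, e5, hrec2, hTr, hTr1]
    by_cases hc : (2:ℕ) = r - 1
    · rw [if_pos hc]
      have hT2 : T 2 = 1 := by rw [show (2:ℕ) = r - 1 from hc]; exact hT1
      have hrv : r = 3 := by omega
      rw [hT2, hrv]
      norm_num
    · rw [if_neg hc]
      have hT2 : T 2 = 0 := hT0 2 (by omega)
      rw [hT2]
      ring
  | (k+3) =>
    set K := k + 3 with hK
    have c1 : ((K:ℕ):ℤ) - 1 = ((K-1:ℕ):ℤ) := by omega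
    have c2 : ((K:ℕ):ℤ) - 2 = ((K-2:ℕ):ℤ) := by omega
    have h1 := Az_coe r T K (by omega)
    have h2 : Az r T (((K:ℕ):ℤ) - 1) = (-1)^(K-1) * T ((K-1)+r) := by
      rw [c1, Az_coe r T (K-1) (by omega)]
    have h3 : Az r T (((K:ℕ):ℤ) - 2) = (-1)^(K-2) * T ((K-2)+r) := by
      rw [c2, Az_coe r T (K-2) (by omega)]
    have hTK : T (K + r) = T ((K-1)+r) + T ((K-2)+r) + T K := by
      have h := hTrec (K+r) (by omega)
      have e1 : K + r - 1 = (K-1) + r := by omega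
      have e2 : K + r - 2 = (K-2) + r := by omega
      have e3 : K + r - r = K := by omega
      rw [e1, e2, e3] at h; exact h
    have s1 : (-1:ℤ)^(K-1) = -(-1:ℤ)^K := by
      show (-1:ℤ)^(k+2) = -(-1:ℤ)^(k+3)
      ring
    have s2 : (-1:ℤ)^(K-2) = (-1:ℤ)^K := by
      show (-1:ℤ)^(k+1) = (-1:ℤ)^(k+3)
      ring
    rw [h1, h2, h3, s1, s2, if_neg (by omega), if_neg (by omega)]
    by_cases hkr : K = r
    · rw [if_neg (by omega)]
      have h4 : Az r T (((K:ℕ):ℤ) - r) = 1 := by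
        rw [show ((K:ℕ):ℤ) - r = ((0:ℕ):ℤ) by omega]; rfl
      rw [h4]
      have hTKv : T K = 1 := by rw [hkr]; exact hTr
      have hrK : (-1:ℤ)^r = (-1:ℤ)^K := by rw [hkr]
      rw [hrK]
      linear_combination ((-1:ℤ)^K) * hTK + ((-1:ℤ)^K) * hTKv
    · by_cases hkr1 : K = r - 1
      · rw [if_pos hkr1]
        have h4 : Az r T (((K:ℕ):ℤ) - r) = 0 := Az_neg _ _ _ (by omega)
        rw [h4]
        have hTKv : T K = 1 := by rw [hkr1]; exact hT1
        have hs : (-1:ℤ)^r = -(-1:ℤ)^K := by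
          have h : (-1:ℤ)^r = (-1)^K * (-1) := by rw [← pow_succ]; congr 1; omega
          rw [h]; ring
        rw [hs]
        linear_combination ((-1:ℤ)^K) * hTK + ((-1:ℤ)^K) * hTKv
      · rw [if_neg hkr1]
        by_cases hlt : K < r - 1
        · have h4 : Az r T (((K:ℕ):ℤ) - r) = 0 := Az_neg _ _ _ (by omega)
          have hTKv : T K = 0 := hT0 K hlt
          rw [h4]
          linear_combination ((-1:ℤ)^K) * hTK + ((-1:ℤ)^K) * hTKv
        · have hKgt : r < K := by omega
          have c4 : ((K:ℕ):ℤ) - r = ((K - r : ℕ):ℤ) := by omega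
          have h4 : Az r T (((K:ℕ):ℤ) - r) = (-1)^(K-r) * T K := by
            rw [c4, Az_coe r T (K-r) (by omega)]
            congr 2
            omega
          rw [h4]
          have hs : (-1:ℤ)^r * (-1:ℤ)^(K-r) = (-1:ℤ)^K := by
            rw [← pow_add]; congr 1; omega
          linear_combination ((-1:ℤ)^K) * hTK - (T K) * hs

end Tvals

/-! ## Sz recurrence -/

lemma Sz_rec (r : ℕ) (hr : 3 ≤ r) (m : ℤ) (hm : 1 ≤ m) :
    Sz r m = Sz r (m-1) + (-1)^r * Sz r (m - r + 1) := by
  obtain ⟨n, rfl⟩ : ∃ n : ℕ, m = (n:ℤ) := ⟨m.toNat, by omega⟩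
  have hn : 1 ≤ n := by omega
  have h := sN_rec r hr (n-1)
  have e : (n-1)+1 = n := by omega
  rw [e] at h
  rw [Sz_coe, show ((n:ℤ) - 1) = ((n-1:ℕ):ℤ) by omega, Sz_coe]
  by_cases hc : r - 1 ≤ n
  · rw [if_pos hc] at h
    rw [show ((n:ℤ) - r + 1) = ((n-(r-1):ℕ):ℤ) by omega, Sz_coe]
    exact h
  · rw [if_neg hc] at h
    rw [Sz_neg r _ (by omega)]
    rw [h]
    ring

/-! ## shift lemma -/

lemma conv_shift (f g : ℤ → ℤ) (hf : ∀ x : ℤ, x < 0 → f x = 0)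
    (hg : ∀ x : ℤ, x < 0 → g x = 0) (m d : ℕ) :
    ∑ k ∈ Finset.range (m+1), f k * g ((m:ℤ) - d - k) =
      ∑ k ∈ Finset.range (m+1), f ((k:ℤ) - d) * g ((m:ℤ) - k) := by
  have h2 : ∑ k ∈ Finset.range (m+1), f ((k:ℤ) - d) * g ((m:ℤ) - k)
      = ∑ k ∈ Finset.range (m+d+1), f ((k:ℤ) - d) * g ((m:ℤ) - k) := by
    apply Finset.sum_subset (Finset.range_subset_range.mpr (by omega))
    intro k hk hk2
    simp only [Finset.mem_range] at hk hk2
    rw [hg _ (by omega), mul_zero]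
  have hi : ∑ k ∈ Finset.Ico d (m+d+1), f ((k:ℤ) - d) * g ((m:ℤ) - k)
      = ∑ k ∈ Finset.range (m+1), f (((d + k:ℕ):ℤ) - d) * g ((m:ℤ) - ((d + k:ℕ):ℤ)) := by
    rw [Finset.sum_Ico_eq_sum_range]
    have e : m + d + 1 - d = m + 1 := by omega
    rw [e]
  have hsplit := Finset.sum_Ico_consecutive (fun k : ℕ => f ((k:ℤ) - d) * g ((m:ℤ) - k))
      (by omega : 0 ≤ d) (by omega : d ≤ m+d+1)
  have hz : ∑ k ∈ Finset.Ico 0 d, f ((k:ℤ) - d) * g ((m:ℤ) - k) = 0 := by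
    apply Finset.sum_eq_zero
    intro k hk
    simp only [Finset.mem_Ico] at hk
    rw [hf _ (by omega), zero_mul]
  have h3 : ∑ k ∈ Finset.range (m+d+1), f ((k:ℤ) - d) * g ((m:ℤ) - k)
      = ∑ k ∈ Finset.range (m+1), f (((d + k:ℕ):ℤ) - d) * g ((m:ℤ) - ((d + k:ℕ):ℤ)) := by
    rw [Finset.range_eq_Ico, ← hsplit, hz, zero_add, hi, Finset.range_eq_Ico]
  rw [h2, h3]
  apply Finset.sum_congr rfl
  intro k hk
  have e1 : ((d + k:ℕ):ℤ) - d = (k:ℤ) := by push_cast; ring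
  have e2 : (m:ℤ) - ((d + k:ℕ):ℤ) = (m:ℤ) - d - k := by push_cast; ring
  rw [e1, e2]

/-! ## convolution with Ez -/

lemma conv_E (r : ℕ) (T : ℕ → ℤ) (hr : 3 ≤ r)
    (hT0 : ∀ k, k < r - 1 → T k = 0) (hT1 : T (r - 1) = 1)
    (hTrec : ∀ n, r ≤ n → T n = T (n - 1) + T (n - 2) + T (n - r))
    (m : ℕ) (hm : 1 ≤ m) :
    ∑ k ∈ Finset.range (m+1), Az r T k * Ez r ((m:ℤ) - k) = 0 := by
  have hfA : ∀ x : ℤ, x < 0 → Az r T x = 0 := fun x h => Az_neg r T x h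
  have hgS : ∀ x : ℤ, x < 0 → Sz r x = 0 := fun x h => Sz_neg r x h
  have expand : ∀ k ∈ Finset.range (m+1), Az r T (k:ℤ) * Ez r ((m:ℤ) - k)
      = Az r T (k:ℤ) * Sz r ((m:ℤ) - k)
        + Az r T (k:ℤ) * Sz r ((m:ℤ) - ((1:ℕ):ℤ) - k)
        - Az r T (k:ℤ) * Sz r ((m:ℤ) - ((2:ℕ):ℤ) - k)
        - (-1)^r * (Az r T (k:ℤ) * Sz r ((m:ℤ) - ((r:ℕ):ℤ) - k)) := by
    intro k _
    simp only [Ez]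
    have e1 : (m:ℤ) - k - 1 = (m:ℤ) - ((1:ℕ):ℤ) - k := by push_cast; ring
    have e2 : (m:ℤ) - k - 2 = (m:ℤ) - ((2:ℕ):ℤ) - k := by push_cast; ring
    have e3 : (m:ℤ) - k - r = (m:ℤ) - ((r:ℕ):ℤ) - k := by push_cast; ring
    rw [e1, e2, e3]
    ring
  rw [Finset.sum_congr rfl expand]
  rw [Finset.sum_sub_distrib, Finset.sum_sub_distrib, Finset.sum_add_distrib,
    ← Finset.mul_sum]
  rw [conv_shift (Az r T) (Sz r) hfA hgS m 1, conv_shift (Az r T) (Sz r) hfA hgS m 2,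
    conv_shift (Az r T) (Sz r) hfA hgS m r]
  rw [Finset.mul_sum, ← Finset.sum_add_distrib, ← Finset.sum_sub_distrib,
    ← Finset.sum_sub_distrib]
  have final : ∀ k ∈ Finset.range (m+1),
      (Az r T (k:ℤ) * Sz r ((m:ℤ)-k) + Az r T ((k:ℤ) - ((1:ℕ):ℤ)) * Sz r ((m:ℤ)-k)
        - Az r T ((k:ℤ) - ((2:ℕ):ℤ)) * Sz r ((m:ℤ)-k)
        - (-1)^r * (Az r T ((k:ℤ) - ((r:ℕ):ℤ)) * Sz r ((m:ℤ)-k)))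
      = (if k = 0 then Sz r ((m:ℤ)-k) else 0) - (if k = 1 then Sz r ((m:ℤ)-k) else 0)
          - (-1)^r * (if k = r-1 then Sz r ((m:ℤ)-k) else 0) := by
    intro k _
    have hB := B_identity r T hr hT0 hT1 hTrec k
    have e1 : ((1:ℕ):ℤ) = 1 := by norm_num
    have e2 : ((2:ℕ):ℤ) = 2 := by norm_num
    rw [e1, e2]
    have expand2 : Az r T (k:ℤ) * Sz r ((m:ℤ)-k) + Az r T ((k:ℤ) - 1) * Sz r ((m:ℤ)-k)
        - Az r T ((k:ℤ) - 2) * Sz r ((m:ℤ)-k)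
        - (-1)^r * (Az r T ((k:ℤ) - r) * Sz r ((m:ℤ)-k))
        = (Az r T (k:ℤ) + Az r T ((k:ℤ)-1) - Az r T ((k:ℤ)-2)
            - (-1)^r * Az r T ((k:ℤ)-r)) * Sz r ((m:ℤ)-k) := by ring
    rw [expand2, hB]
    split_ifs <;> ring
  rw [Finset.sum_congr rfl final]
  rw [Finset.sum_sub_distrib, Finset.sum_sub_distrib, ← Finset.mul_sum]
  rw [Finset.sum_ite_eq' (Finset.range (m+1)) 0 (fun k => Sz r ((m:ℤ)-k)),
    Finset.sum_ite_eq' (Finset.range (m+1)) 1 (fun k => Sz r ((m:ℤ)-k)),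
    Finset.sum_ite_eq' (Finset.range (m+1)) (r-1) (fun k => Sz r ((m:ℤ)-k))]
  rw [if_pos (by simp), if_pos (by simp [Finset.mem_range]; omega)]
  have hrec := Sz_rec r hr (m:ℤ) (by omega)
  by_cases hc : r - 1 ≤ m
  · rw [if_pos (by simp [Finset.mem_range]; omega)]
    have e0 : (m:ℤ) - ((0:ℕ):ℤ) = (m:ℤ) := by norm_num
    have e1 : (m:ℤ) - ((1:ℕ):ℤ) = (m:ℤ) - 1 := by norm_num
    have e2 : (m:ℤ) - ((r-1:ℕ):ℤ) = (m:ℤ) - r + 1 := by omega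
    rw [e0, e1, e2, hrec]
    ring
  · rw [if_neg (by simp [Finset.mem_range]; omega)]
    have e0 : (m:ℤ) - ((0:ℕ):ℤ) = (m:ℤ) := by norm_num
    have e1 : (m:ℤ) - ((1:ℕ):ℤ) = (m:ℤ) - 1 := by norm_num
    have hz : Sz r ((m:ℤ) - r + 1) = 0 := Sz_neg r _ (by omega)
    rw [e0, e1, hrec, hz]
    ring

/-! ## convolution with Dz -/

lemma conv_D (r : ℕ) (T : ℕ → ℤ) (m : ℕ) (hm : 1 ≤ m) :
    ∑ k ∈ Finset.range (m+1), Az r T k * Dz r T ((m:ℤ) - k) = 0 := by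
  obtain ⟨m', rfl⟩ : ∃ m', m = m' + 1 := ⟨m-1, by omega⟩
  rw [Finset.sum_range_succ']
  have key := THdet_rec (fun k => if k = 0 then 1 else T (k + r)) (by norm_num) m'
  have hterm : ∀ k ∈ Finset.range (m'+1),
      Az r T ((k+1:ℕ):ℤ) * Dz r T (((m'+1:ℕ):ℤ) - ((k+1:ℕ):ℤ))
      = -((-1:ℤ)^k * (if k+1 = 0 then 1 else T (k+1+r))
          * THdet (fun k => if k = 0 then 1 else T (k + r)) (m' - k)) := by
    intro k hk
    simp only [Finset.mem_range] at hk
    have e1 : (((m'+1:ℕ)):ℤ) - ((k+1:ℕ):ℤ) = ((m'-k : ℕ):ℤ) := by omega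
    rw [e1, Dz_coe, Az_coe r T (k+1) (by omega)]
    rw [if_neg (by omega)]
    have : (-1:ℤ)^(k+1) = -(-1:ℤ)^k := by ring
    rw [this]
    ring
  rw [Finset.sum_congr rfl hterm, Finset.sum_neg_distrib, ← key]
  have e0 : (((m'+1:ℕ)):ℤ) - ((0:ℕ):ℤ) = ((m'+1:ℕ):ℤ) := by norm_num
  rw [e0, Dz_coe, Az_zero']
  ring

/-! ## D = E -/

lemma D_eq_E (r : ℕ) (T : ℕ → ℤ) (hr : 3 ≤ r)
    (hT0 : ∀ k, k < r - 1 → T k = 0) (hT1 : T (r - 1) = 1)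
    (hTrec : ∀ n, r ≤ n → T n = T (n - 1) + T (n - 2) + T (n - r)) :
    ∀ m : ℕ, Dz r T (m:ℤ) = Ez r (m:ℤ) := by
  intro m
  induction m using Nat.strong_induction_on with
  | _ m ih =>
    match m with
    | 0 =>
      rw [Dz_coe, THdet_zero]
      simp only [Ez]
      rw [Sz_neg r (((0:ℕ):ℤ)-1) (by norm_num), Sz_neg r (((0:ℕ):ℤ)-2) (by norm_num),
        Sz_neg r (((0:ℕ):ℤ)-(r:ℤ)) (by omega)]
      rw [Sz_coe, sN_zero]
      ring
    | (m+1) =>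
      have h1 := conv_D r T (m+1) (by omega)
      have h2 := conv_E r T hr hT0 hT1 hTrec (m+1) (by omega)
      have h3 : ∑ k ∈ Finset.range (m+2),
          (Az r T (k:ℤ) * Dz r T (((m+1:ℕ):ℤ) - k) - Az r T (k:ℤ) * Ez r (((m+1:ℕ):ℤ) - k)) = 0 := by
        rw [Finset.sum_sub_distrib, h1, h2]
        ring
      rw [Finset.sum_range_succ'] at h3
      have hz : ∀ k ∈ Finset.range (m+1),
          Az r T ((k+1:ℕ):ℤ) * Dz r T (((m+1:ℕ):ℤ) - ((k+1:ℕ):ℤ))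
            - Az r T ((k+1:ℕ):ℤ) * Ez r (((m+1:ℕ):ℤ) - ((k+1:ℕ):ℤ)) = 0 := by
        intro k hk
        simp only [Finset.mem_range] at hk
        have e : (((m+1:ℕ)):ℤ) - ((k+1:ℕ):ℤ) = ((m-k:ℕ):ℤ) := by omega
        rw [e, ih (m-k) (by omega)]
        ring
      rw [Finset.sum_congr rfl hz, Finset.sum_const_zero, zero_add] at h3
      have e0 : (((m+1:ℕ)):ℤ) - ((0:ℕ):ℤ) = ((m+1:ℕ):ℤ) := by norm_num
      rw [e0, Az_zero'] at h3
      linarith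

theorem stmt_17 (r : ℕ) (hr : 3 ≤ r) (T : ℕ → ℤ)
    (hT0 : ∀ k, k < r - 1 → T k = 0) (hT1 : T (r - 1) = 1)
    (hTrec : ∀ n, r ≤ n → T n = T (n - 1) + T (n - 2) + T (n - r))
    (n : ℕ) (hn : 2 ≤ n) :
    THdet (fun k => if k = 0 then 1 else T (k + r)) n =
      ∑ i ∈ Finset.range (n / (r - 1) + 1),
        (-1) ^ (r * i) * ((n - (r - 2) * i).choose i : ℤ) := by
  have hD := D_eq_E r T hr hT0 hT1 hTrec n
  rw [Dz_coe] at hD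
  have hEz : Ez r (n:ℤ) = Sz r (n:ℤ) := by
    simp only [Ez]
    have hrec := Sz_rec r hr ((n:ℤ)-1) (by omega)
    have e : ((n:ℤ)-1) - 1 = (n:ℤ) - 2 := by ring
    have e2 : ((n:ℤ)-1) - r + 1 = (n:ℤ) - r := by ring
    rw [e, e2] at hrec
    rw [hrec]
    ring
  rw [hEz, Sz_coe] at hD
  rw [hD]
  simp only [sN]
  have hsub : Finset.range (n/(r-1)+1) ⊆ Finset.range (n+1) :=
    Finset.range_subset_range.mpr (by have := Nat.div_le_self n (r-1); omega)
  have hvan : ∀ i ∈ Finset.range (n+1), i ∉ Finset.range (n/(r-1)+1) →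
      (-1:ℤ)^(r*i) * (((n - (r-2)*i).choose i : ℕ) : ℤ) = 0 := by
    intro i hi hi2
    simp only [Finset.mem_range] at hi hi2
    have hlt : n / (r-1) < i := by omega
    have h' : n < i * (r-1) := (Nat.div_lt_iff_lt_mul (by omega)).mp hlt
    have h'' : n < (r-1) * i := by rw [Nat.mul_comm]; exact h'
    have hi1 : 1 ≤ i := Nat.lt_of_le_of_lt (Nat.zero_le _) hlt
    rw [choose_vanish r hr n i hi1 h'']
    simp
  calc ∑ i ∈ Finset.range (n+1), ((-1:ℤ)^r)^i * (((n - (r-2)*i).choose i : ℕ) : ℤ)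
      = ∑ i ∈ Finset.range (n+1), (-1:ℤ)^(r*i) * (((n - (r-2)*i).choose i : ℕ) : ℤ) :=
        Finset.sum_congr rfl (fun i _ => by rw [pow_mul])
    _ = ∑ i ∈ Finset.range (n/(r-1)+1), (-1:ℤ)^(r*i) * (((n - (r-2)*i).choose i : ℕ) : ℤ) :=
        (Finset.sum_subset hsub hvan).symm
end

section
/- Fix an integer r ≥ 2 and let {F_n^{(r)}} be the generalized r-step Fibonacci numbers defined by F_n^{(r)} = F_{n−1}^{(r)} + F_{n−2}^{(r)} + ⋯ + F_{n−r}^{(r)} for n ≥ r, with F_0^{(r)} = ⋯ = F_{r−2}^{(r)} = 0 and F_{r−1}^{(r)} = 1. For every integer n ≥ 1, the Toeplitz–Hessenberg determinant det(−1; F_0^{(r)}, F_1^{(r)}, …, F_{n−1}^{(r)}) equals ⌊(2^n + 2^r − 2)/(2^{r+1} − 2)⌋. -/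
def aF (F : ℕ → ℤ) : ℕ → ℤ := fun k => if k = 0 then -1 else F (k - 1)

def Bmat (F : ℕ → ℤ) (s n : ℕ) : Matrix (Fin n) (Fin n) ℤ :=
  Matrix.of fun i j => if (j : ℕ) = 0 then F ((i : ℕ) + s)
    else if (j : ℕ) ≤ (i : ℕ) + 1 then aF F ((i : ℕ) + 1 - (j : ℕ)) else 0

def Dseq (F : ℕ → ℤ) : ℕ → ℤ
  | 0 => 1
  | n + 1 => ∑ j ∈ Finset.range (n + 1), F j * Dseq F (n - j)
decreasing_by omega

lemma Dseq_succ (F : ℕ → ℤ) (n : ℕ) :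
    Dseq F (n + 1) = ∑ j ∈ Finset.range (n + 1), F j * Dseq F (n - j) := by
  rw [Dseq]

lemma THdet_eq_Bmat (F : ℕ → ℤ) (n : ℕ) : THdet (aF F) n = (Bmat F 0 n).det := by
  unfold THdet Bmat
  congr 1
  ext i j
  simp only [Matrix.of_apply]
  rcases eq_or_ne (j : ℕ) 0 with h | h
  · simp [h, aF, Nat.le_add_left]
  · simp [h]

lemma Bmat_det_one (F : ℕ → ℤ) (s : ℕ) : (Bmat F s 1).det = F s := by
  rw [Matrix.det_fin_one]
  simp [Bmat]

lemma Bmat_expand (F : ℕ → ℤ) (s n : ℕ) :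
    (Bmat F s (n + 2)).det = F s * (Bmat F 0 (n + 1)).det + (Bmat F (s + 1) (n + 1)).det := by
  rw [Matrix.det_succ_row_zero]
  rw [Fin.sum_univ_succ, Fin.sum_univ_succ]
  have h0 : ∀ j : Fin n, (Bmat F s (n+2)) 0 (Fin.succ (Fin.succ j)) = 0 := by
    intro j
    simp only [Bmat, Matrix.of_apply, Fin.val_succ]
    norm_num
  rw [Finset.sum_eq_zero (fun j _ => by rw [h0 j]; ring)]
  have e1 : (Bmat F s (n+2)).submatrix Fin.succ (Fin.succAbove 0) = Bmat F 0 (n+1) := by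
    ext i j
    simp only [Matrix.submatrix_apply, Bmat, Matrix.of_apply, Fin.succAbove_zero,
      Fin.val_succ]
    rcases eq_or_ne (j : ℕ) 0 with h | h
    · simp [h, aF]
    · have h2 : (j:ℕ) + 1 ≠ 0 := by omega
      simp only [h2, if_false, h, if_false]
      have : ((j:ℕ)+1 ≤ (i:ℕ)+1+1) ↔ ((j:ℕ) ≤ (i:ℕ)+1) := by omega
      rw [if_congr this rfl rfl]
      rcases le_or_gt (j:ℕ) ((i:ℕ)+1) with h3 | h3
      · rw [if_pos h3, if_pos h3]
        congr 1
        omega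
      · rw [if_neg (not_le.mpr h3), if_neg (not_le.mpr h3)]
  have e2 : (Bmat F s (n+2)).submatrix Fin.succ (Fin.succAbove 1) = Bmat F (s+1) (n+1) := by
    ext i j
    simp only [Matrix.submatrix_apply, Bmat, Matrix.of_apply, Fin.val_succ]
    have hval : ((Fin.succAbove 1 j : Fin (n+2)) : ℕ) = if (j:ℕ) < 1 then (j:ℕ) else (j:ℕ)+1 := by
      rcases lt_or_ge ((j:ℕ)) 1 with h | h
      · rw [Fin.succAbove_of_castSucc_lt]
        · simp [h]
        · simp only [Fin.lt_def, Fin.coe_castSucc]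
          simpa using h
      · rw [Fin.succAbove_of_le_castSucc]
        · simp [Nat.not_lt.mpr h]
        · simp only [Fin.le_def, Fin.coe_castSucc]
          simpa using h
    rw [hval]
    rcases lt_or_ge ((j:ℕ)) 1 with h | h
    · have hj0 : (j:ℕ) = 0 := by omega
      rw [if_pos h, hj0]
      have h5 : (i:ℕ) + 1 + s = (i:ℕ) + (s+1) := by omega
      simp [h5]
    · have h1 : ¬ ((j:ℕ) < 1) := by omega
      have h2 : (j:ℕ) + 1 ≠ 0 := by omega
      have h3 : (j:ℕ) ≠ 0 := by omega
      rw [if_neg h1]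
      simp only [h2, h3, if_false]
      have hiff : ((j:ℕ)+1 ≤ (i:ℕ)+1+1) ↔ ((j:ℕ) ≤ (i:ℕ)+1) := by omega
      rw [if_congr hiff rfl rfl]
      rcases le_or_gt (j:ℕ) ((i:ℕ)+1) with h4 | h4
      · rw [if_pos h4, if_pos h4]
        congr 1
        omega
      · rw [if_neg (not_le.mpr h4), if_neg (not_le.mpr h4)]
  rw [e1, show (Fin.succ (0 : Fin (n+1))).succAbove = Fin.succAbove 1 by rw [Fin.succ_zero_eq_one], e2]
  have hB00 : (Bmat F s (n+2)) 0 0 = F s := by simp [Bmat]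
  have hB01 : (Bmat F s (n+2)) 0 (Fin.succ 0) = -1 := by
    simp [Bmat, aF]
  rw [hB00, hB01]
  simp only [Fin.val_zero, Fin.val_succ, pow_zero, pow_one]
  ring

lemma Dseq_conv' (F : ℕ → ℤ) (m : ℕ) :
    Dseq F (m + 1) = ∑ k ∈ Finset.range (m + 1), F (m - k) * Dseq F k := by
  rw [Dseq_succ]
  rw [← Finset.sum_range_reflect (fun k => F (m - k) * Dseq F k) (m+1)]
  apply Finset.sum_congr rfl
  intro j hj
  simp only [Finset.mem_range] at hj
  have h1 : m + 1 - 1 - j = m - j := by omega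
  have h2 : m - (m - j) = j := by omega
  rw [h1, h2]

section
variable (r : ℕ) (F : ℕ → ℤ)

lemma F_r (hr : 2 ≤ r) (hF0 : ∀ k, k < r - 1 → F k = 0) (hF1 : F (r - 1) = 1)
    (hFrec : ∀ n, r ≤ n → F n = ∑ j ∈ Finset.Icc 1 r, F (n - j)) : F r = 1 := by
  rw [hFrec r le_rfl]
  rw [Finset.sum_eq_single_of_mem 1 (by simp [Finset.mem_Icc]; omega)]
  · simpa using hF1
  · intro b hb hb1
    simp only [Finset.mem_Icc] at hb
    exact hF0 _ (by omega)

lemma F_step (hr : 2 ≤ r)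
    (hFrec : ∀ n, r ≤ n → F n = ∑ j ∈ Finset.Icc 1 r, F (n - j)) :
    ∀ m, r ≤ m → F (m + 1) = 2 * F m - F (m - r) := by
  intro m hm
  have hconv : ∀ n, r ≤ n → F n = ∑ k ∈ Finset.range r, F (n - 1 - k) := by
    intro n hn
    rw [hFrec n hn, ← Finset.Ico_add_one_right_eq_Icc, Finset.sum_Ico_eq_sum_range]
    apply Finset.sum_congr (by congr 1)
    intro k hk
    congr 1
    omega
  have h1 : F (m+1) = ∑ k ∈ Finset.range r, F (m - k) := by
    rw [hconv (m+1) (by omega)]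
    apply Finset.sum_congr rfl
    intro k hk
    congr 1 <;> omega
  have h2 : F m = ∑ k ∈ Finset.range r, F (m - 1 - k) := hconv m hm
  -- peel first term of h1 : k = 0 term is F m
  have h3 : ∑ k ∈ Finset.range r, F (m - k)
      = (∑ k ∈ Finset.range (r-1), F (m - 1 - k)) + F m := by
    have hr' : r = (r - 1) + 1 := by omega
    rw [hr', Finset.sum_range_succ']
    congr 1
    apply Finset.sum_congr rfl
    intro k hk
    congr 1 <;> omega
  -- peel last term of h2
  have h4 : F m = (∑ k ∈ Finset.range (r-1), F (m - 1 - k)) + F (m - r) := by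
    rw [h2]
    have hr' : r = (r - 1) + 1 := by omega
    rw [hr', Finset.sum_range_succ]
    congr 2
    omega
  rw [h1, h3]
  omega

lemma Dseq_small (hr : 2 ≤ r) (hF0 : ∀ k, k < r - 1 → F k = 0) :
    ∀ m, 1 ≤ m → m ≤ r - 1 → Dseq F m = 0 := by
  rintro (_ | k) hm hm'
  · omega
  · rw [Dseq_succ]
    apply Finset.sum_eq_zero
    intro j hj
    simp only [Finset.mem_range] at hj
    rw [hF0 j (by omega), zero_mul]

lemma Dseq_r (hr : 2 ≤ r) (hF0 : ∀ k, k < r - 1 → F k = 0) (hF1 : F (r - 1) = 1) :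
    Dseq F r = 1 := by
  have hr' : r = (r - 1) + 1 := by omega
  rw [hr', Dseq_succ]
  rw [Finset.sum_eq_single_of_mem (r-1) (by simp)]
  · simp [hF1, Dseq]
  · intro b hb hb1
    simp only [Finset.mem_range] at hb
    rw [hF0 b (by omega), zero_mul]

lemma Dseq_r1 (hr : 2 ≤ r) (hF0 : ∀ k, k < r - 1 → F k = 0) (hF1 : F (r - 1) = 1)
    (hFrec : ∀ n, r ≤ n → F n = ∑ j ∈ Finset.Icc 1 r, F (n - j)) :
    Dseq F (r + 1) = 1 := by
  rw [Dseq_succ, Finset.sum_range_succ]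
  have h1 : ∑ j ∈ Finset.range r, F j * Dseq F (r - j) = 0 := by
    apply Finset.sum_eq_zero
    intro j hj
    simp only [Finset.mem_range] at hj
    rcases eq_or_ne j (r-1) with h | h
    · rw [h]
      have : r - (r - 1) = 1 := by omega
      rw [this, Dseq_small r F hr hF0 1 le_rfl (by omega), mul_zero]
    · rw [hF0 j (by omega), zero_mul]
  rw [h1, F_r r F hr hF0 hF1 hFrec]
  simp [Dseq]

lemma Dseq_key (hr : 2 ≤ r) (hF0 : ∀ k, k < r - 1 → F k = 0) (hF1 : F (r - 1) = 1)
    (hFrec : ∀ n, r ≤ n → F n = ∑ j ∈ Finset.Icc 1 r, F (n - j)) :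
    ∀ n, r + 1 ≤ n → Dseq F (n + 1)
      = 2 * Dseq F n + Dseq F (n + 1 - r) - 2 * Dseq F (n - r) := by
  intro n hn
  have hFr : F r = 1 := F_r r F hr hF0 hF1 hFrec
  have hDn : Dseq F n = ∑ k ∈ Finset.range n, F (n - 1 - k) * Dseq F k := by
    have h : n = (n - 1) + 1 := by omega
    rw [h, Dseq_conv']
    apply Finset.sum_congr (by congr 1)
    intro k hk
    congr 2
  -- step 1
  have step1 : Dseq F (n + 1)
      = Dseq F n + ∑ k ∈ Finset.range n, (F (n - k) - F (n - 1 - k)) * Dseq F k := by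
    rw [Dseq_conv', Finset.sum_range_succ, Nat.sub_self, hF0 0 (by omega), zero_mul, add_zero]
    rw [hDn, ← Finset.sum_add_distrib]
    apply Finset.sum_congr rfl
    intro k hk
    ring
  have hgen : ∀ f : ℕ → ℤ, ∑ k ∈ Finset.range n, f k
      = (∑ k ∈ Finset.range (n - r), f k) + ∑ k ∈ Finset.Ico (n - r) n, f k := by
    intro f
    rw [Finset.range_eq_Ico, Finset.range_eq_Ico,
      Finset.sum_Ico_consecutive _ (Nat.zero_le _) (by omega : n - r ≤ n)]
  -- split the correction sum
  have hsplit : ∑ k ∈ Finset.range n, (F (n - k) - F (n - 1 - k)) * Dseq F k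
      = (∑ k ∈ Finset.range (n - r), (F (n - k) - F (n - 1 - k)) * Dseq F k)
        + ∑ k ∈ Finset.Ico (n - r) n, (F (n - k) - F (n - 1 - k)) * Dseq F k := by
    exact hgen _
  -- part B : the Ico part equals Dseq F (n+1-r)
  have partB : ∑ k ∈ Finset.Ico (n - r) n, (F (n - k) - F (n - 1 - k)) * Dseq F k
      = Dseq F (n + 1 - r) := by
    rw [Finset.sum_eq_single_of_mem (n + 1 - r) (by simp [Finset.mem_Ico]; omega)]
    · have e1 : n - (n + 1 - r) = r - 1 := by omega
      have e2 : n - 1 - (n + 1 - r) = r - 2 := by omega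
      rw [e1, e2, hF1, hF0 (r-2) (by omega)]
      ring
    · intro b hb hb1
      simp only [Finset.mem_Ico] at hb
      rcases eq_or_ne b (n - r) with h | h
      · have e1 : n - b = r := by omega
        have e2 : n - 1 - b = r - 1 := by omega
        rw [e1, e2, hFr, hF1]
        ring
      · have e1 : n - b < r - 1 := by omega
        have e2 : n - 1 - b < r - 1 := by omega
        rw [hF0 _ e1, hF0 _ e2]
        ring
  -- part A
  have partA : ∑ k ∈ Finset.range (n - r), (F (n - k) - F (n - 1 - k)) * Dseq F k
      = Dseq F n - 2 * Dseq F (n - r) := by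
    have hA1 : ∑ k ∈ Finset.range (n - r), (F (n - k) - F (n - 1 - k)) * Dseq F k
        = ∑ k ∈ Finset.range (n - r), (F (n - 1 - k) * Dseq F k - F (n - 1 - r - k) * Dseq F k) := by
      apply Finset.sum_congr rfl
      intro k hk
      simp only [Finset.mem_range] at hk
      have hm : r ≤ n - 1 - k := by omega
      have e1 : n - k = (n - 1 - k) + 1 := by omega
      have e2 : n - 1 - k - r = n - 1 - r - k := by omega
      rw [e1, F_step r F hr hFrec (n-1-k) hm, e2]
      ring
    rw [hA1, Finset.sum_sub_distrib]
    -- first piece : Dseq F n minus tail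
    have hB1 : ∑ k ∈ Finset.range (n - r), F (n - 1 - k) * Dseq F k
        = Dseq F n - Dseq F (n - r) := by
      have hsum : (∑ k ∈ Finset.range (n - r), F (n - 1 - k) * Dseq F k)
          + ∑ k ∈ Finset.Ico (n - r) n, F (n - 1 - k) * Dseq F k
          = Dseq F n := by
        rw [hDn, hgen]
      have htail : ∑ k ∈ Finset.Ico (n - r) n, F (n - 1 - k) * Dseq F k = Dseq F (n - r) := by
        rw [Finset.sum_eq_single_of_mem (n - r) (by simp [Finset.mem_Ico]; omega)]
        · have e1 : n - 1 - (n - r) = r - 1 := by omega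
          rw [e1, hF1, one_mul]
        · intro b hb hb1
          simp only [Finset.mem_Ico] at hb
          rw [hF0 (n - 1 - b) (by omega), zero_mul]
      omega
    have hB2 : ∑ k ∈ Finset.range (n - r), F (n - 1 - r - k) * Dseq F k = Dseq F (n - r) := by
      have h : n - r = (n - r - 1) + 1 := by omega
      rw [h, Dseq_conv']
      apply Finset.sum_congr (by congr 1)
      intro k hk
      congr 2
      omega
    rw [hB1, hB2]
    ring
  rw [step1, hsplit, partA, partB]
  ring


lemma Dseq_shift (hr : 2 ≤ r) (hF0 : ∀ k, k < r - 1 → F k = 0) (hF1 : F (r - 1) = 1)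
    (hFrec : ∀ n, r ≤ n → F n = ∑ j ∈ Finset.Icc 1 r, F (n - j)) :
    ∀ n, 1 ≤ n → Dseq F (n + r) = Dseq F n + 2 ^ (n - 1) := by
  intro n hn
  induction n, hn using Nat.le_induction with
  | base =>
    have h1 : 1 + r = r + 1 := by omega
    rw [h1, Dseq_r1 r F hr hF0 hF1 hFrec,
      Dseq_small r F hr hF0 1 le_rfl (by omega)]
    norm_num
  | succ n hn ih =>
    have hkey := Dseq_key r F hr hF0 hF1 hFrec (n + r) (by omega)
    have e1 : n + r + 1 - r = n + 1 := by omega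
    have e2 : n + r - r = n := by omega
    have e3 : n + 1 + r = n + r + 1 := by omega
    rw [e3, hkey, e1, e2, ih]
    have e4 : (2:ℤ) * 2 ^ (n - 1) = 2 ^ n := by
      have h : n - 1 + 1 = n := by omega
      calc (2:ℤ) * 2 ^ (n - 1) = 2 ^ (n - 1 + 1) := by rw [pow_succ]; ring
      _ = 2 ^ n := by rw [h]
    have e5 : n + 1 - 1 = n := by omega
    rw [e5]
    linarith [e4]

def gseq (r n : ℕ) : ℕ := (2 ^ n + 2 ^ r - 2) / (2 ^ (r + 1) - 2)

lemma gseq_small (hr : 2 ≤ r) : ∀ m, m ≤ r - 1 → gseq r m = 0 := by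
  intro m hm
  apply Nat.div_eq_of_lt
  have h1 : 2 ^ m < 2 ^ r := Nat.pow_lt_pow_right one_lt_two (by omega)
  have h2 : 2 ^ (r + 1) = 2 * 2 ^ r := by rw [pow_succ]; ring
  have h3 : 4 ≤ 2 ^ r := by
    calc (4:ℕ) = 2 ^ 2 := by norm_num
    _ ≤ 2 ^ r := Nat.pow_le_pow_right (by norm_num) hr
  omega

lemma gseq_r (hr : 2 ≤ r) : gseq r r = 1 := by
  unfold gseq
  have h2 : 2 ^ (r + 1) = 2 * 2 ^ r := by rw [pow_succ]; ring
  have h3 : 4 ≤ 2 ^ r := by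
    calc (4:ℕ) = 2 ^ 2 := by norm_num
    _ ≤ 2 ^ r := Nat.pow_le_pow_right (by norm_num) hr
  have e : 2 ^ r + 2 ^ r - 2 = 2 ^ (r + 1) - 2 := by omega
  rw [e]
  exact Nat.div_self (by omega)

lemma gseq_shift (hr : 2 ≤ r) : ∀ n, 1 ≤ n → gseq r (n + r) = gseq r n + 2 ^ (n - 1) := by
  intro n hn
  unfold gseq
  have h2 : 2 ^ (r + 1) = 2 * 2 ^ r := by rw [pow_succ]; ring
  have h3 : 4 ≤ 2 ^ r := by
    calc (4:ℕ) = 2 ^ 2 := by norm_num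
    _ ≤ 2 ^ r := Nat.pow_le_pow_right (by norm_num) hr
  have h4 : 2 ^ (n + r) = 2 ^ (n - 1) * 2 ^ (r + 1) := by
    rw [← pow_add]
    congr 1
    omega
  have h5 : 2 ^ n = 2 ^ (n - 1) * 2 := by
    rw [← pow_succ]
    congr 1
    omega
  have h6 : 2 ^ (n - 1) * (2 ^ (r + 1) - 2) = 2 ^ (n - 1) * 2 ^ (r + 1) - 2 ^ (n - 1) * 2 :=
    Nat.mul_sub _ _ _
  have h7 : 2 ^ (n - 1) * 2 ≤ 2 ^ (n - 1) * 2 ^ (r + 1) :=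
    Nat.mul_le_mul_left _ (by omega)
  have e : 2 ^ (n + r) + 2 ^ r - 2
      = (2 ^ n + 2 ^ r - 2) + 2 ^ (n - 1) * (2 ^ (r + 1) - 2) := by
    rw [h4, h6, h5]
    omega
  rw [e, Nat.add_mul_div_right _ _ (by omega : 0 < 2 ^ (r + 1) - 2)]

lemma Dseq_eq_gseq (hr : 2 ≤ r) (hF0 : ∀ k, k < r - 1 → F k = 0) (hF1 : F (r - 1) = 1)
    (hFrec : ∀ n, r ≤ n → F n = ∑ j ∈ Finset.Icc 1 r, F (n - j)) :
    ∀ m, 1 ≤ m → Dseq F m = (gseq r m : ℤ) := by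
  intro m
  induction m using Nat.strong_induction_on with
  | _ m ih =>
    intro hm
    rcases le_or_gt m (r - 1) with h | h
    · rw [Dseq_small r F hr hF0 m hm h, gseq_small r hr m h]
      norm_num
    · rcases eq_or_lt_of_le (show r ≤ m by omega) with h2 | h2
      · rw [← h2, Dseq_r r F hr hF0 hF1, gseq_r r hr]
        norm_num
      · have e : m = (m - r) + r := by omega
        rw [e, Dseq_shift r F hr hF0 hF1 hFrec (m - r) (by omega),
          gseq_shift r hr (m - r) (by omega),
          ih (m - r) (by omega) (by omega)]
        push_cast
        ring

lemma floor_eq_gseq (hr : 2 ≤ r) (n : ℕ) :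
    ⌊((2 : ℚ) ^ n + 2 ^ r - 2) / (2 ^ (r + 1) - 2)⌋ = (gseq r n : ℤ) := by
  have h3 : 4 ≤ 2 ^ r := by
    calc (4:ℕ) = 2 ^ 2 := by norm_num
    _ ≤ 2 ^ r := Nat.pow_le_pow_right (by norm_num) hr
  have h4 : (2:ℕ) ≤ 2 ^ (r + 1) := by
    calc (2:ℕ) = 2 ^ 1 := by norm_num
    _ ≤ 2 ^ (r+1) := Nat.pow_le_pow_right (by norm_num) (by omega)
  have hp1 : (1:ℕ) ≤ 2 ^ n := Nat.one_le_two_pow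
  have hp2 : (1:ℕ) ≤ 2 ^ r := Nat.one_le_two_pow
  have hp3 : (1:ℕ) ≤ 2 ^ (r + 1) := Nat.one_le_two_pow
  have e1 : ((2 : ℚ) ^ n + 2 ^ r - 2) = (((2 ^ n + 2 ^ r - 2 : ℕ) : ℤ) : ℚ) := by
    rw [Int.cast_natCast, Nat.cast_sub (by omega : 2 ≤ 2 ^ n + 2 ^ r)]
    push_cast
    ring
  have e2 : ((2 : ℚ) ^ (r + 1) - 2) = ((2 ^ (r + 1) - 2 : ℕ) : ℚ) := by
    rw [Nat.cast_sub (by omega : 2 ≤ 2 ^ (r + 1))]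
    push_cast
    ring
  rw [e1, e2, Rat.floor_intCast_div_natCast]
  unfold gseq
  rw [Int.natCast_div]

end


lemma Bmat_sum (F : ℕ → ℤ) : ∀ n s, (Bmat F s (n + 1)).det
    = ∑ j ∈ Finset.range (n + 1), F (s + j) * (Bmat F 0 (n - j)).det := by
  intro n
  induction n with
  | zero =>
    intro s
    simp [Bmat_det_one, Matrix.det_fin_zero, Bmat]
  | succ n ih =>
    intro s
    rw [Bmat_expand]
    conv_rhs => rw [Finset.sum_range_succ']
    rw [ih (s + 1)]
    have hcg : ∀ j ∈ Finset.range (n + 1),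
        F (s + (j + 1)) * (Bmat F 0 (n + 1 - (j + 1))).det
        = F (s + 1 + j) * (Bmat F 0 (n - j)).det := by
      intro j hj
      have e1 : n + 1 - (j + 1) = n - j := by omega
      rw [e1]
      congr 2
      omega
    rw [Finset.sum_congr rfl hcg]
    have e0 : s + 0 = s := by omega
    rw [e0, Nat.sub_zero]
    ring

lemma Bmat_Dseq (F : ℕ → ℤ) : ∀ m, (Bmat F 0 m).det = Dseq F m := by
  intro m
  induction m using Nat.strong_induction_on with
  | _ m ih =>
    match m with
    | 0 => simp [Dseq, Matrix.det_fin_zero]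
    | n + 1 =>
      rw [Bmat_sum, Dseq_succ]
      apply Finset.sum_congr rfl
      intro j hj
      simp only [Finset.mem_range] at hj
      rw [ih (n - j) (by omega), zero_add]

theorem stmt_19 (r : ℕ) (hr : 2 ≤ r) (F : ℕ → ℤ)
    (hF0 : ∀ k, k < r - 1 → F k = 0) (hF1 : F (r - 1) = 1)
    (hFrec : ∀ n, r ≤ n → F n = ∑ j ∈ Finset.Icc 1 r, F (n - j))
    (n : ℕ) (hn : 1 ≤ n) :
    THdet (fun k => if k = 0 then -1 else F (k - 1)) n =
      ⌊((2 : ℚ) ^ n + 2 ^ r - 2) / (2 ^ (r + 1) - 2)⌋ := by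
  have h1 : THdet (fun k => if k = 0 then -1 else F (k - 1)) n = THdet (aF F) n := rfl
  rw [h1, THdet_eq_Bmat, Bmat_Dseq, Dseq_eq_gseq r F hr hF0 hF1 hFrec n hn,
    floor_eq_gseq r hr n]
end
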